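/- Let a = e^{ε₁}/(e^{ε₁}+1) and b = e^{ε₂}/(e^{ε₂}+1), ε₁, ε₂ ≥ 0. For the mechanism M_R on binary groups, for any output y = (g', v') with g' = g₁ ≠ g₀: Pr[y | (g₀, v₀)] / Pr[y | (g₁, v₁)] ≤ (1+e^{ε₂})/(2e^{ε₁}) ≤ e^{ε₂ - ε₁}. -/
import Mathlib


open Real

/-- Case `g' = g₁ ≠ g₀` in the LDP proof of `M_R`:
the probability ratio is at most `(1+e^{ε₂})/(2 e^{ε₁}) ≤ e^{ε₂-ε₁}`. -/
theorem mR_case_flip (ε₁ ε₂ : ℝ) (hε₁ : 0 ≤ ε₁) (hε₂ : 0 ≤ ε₂)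
    (a b : ℝ) (ha : a = Real.exp ε₁ / (Real.exp ε₁ + 1))
    (hb : b = Real.exp ε₂ / (Real.exp ε₂ + 1))
    (v₀ v₁ : ℝ) (hv₀ : v₀ ∈ Set.Icc (-1 : ℝ) 1) (hv₁ : v₁ ∈ Set.Icc (-1 : ℝ) 1)
    (v' : ℝ) (hv' : v' = -1 ∨ v' = 1) :
    ((1 - a) / 2) / (a * (1 + (2 * b - 1) * v' * v₁) / 2)
      ≤ (1 + Real.exp ε₂) / (2 * Real.exp ε₁) ∧
    (1 + Real.exp ε₂) / (2 * Real.exp ε₁) ≤ Real.exp (ε₂ - ε₁) := by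
  have hE1 : 0 < Real.exp ε₁ := Real.exp_pos _
  have hE2 : 1 ≤ Real.exp ε₂ := Real.one_le_exp hε₂
  have hd1 : 0 < Real.exp ε₁ + 1 := by linarith
  have hd2 : 0 < Real.exp ε₂ + 1 := by linarith
  have ha0 : 0 < a := by rw [ha]; positivity
  have ha1 : a < 1 := by rw [ha, div_lt_one hd1]; linarith
  have hb1 : 1 / 2 ≤ b := by
    rw [hb, le_div_iff₀ hd2]; linarith
  have hb2 : b < 1 := by rw [hb, div_lt_one hd2]; linarith
  obtain ⟨hv₁l, hv₁r⟩ := hv₁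
  have hvv : -1 ≤ v' * v₁ ∧ v' * v₁ ≤ 1 := by
    rcases hv' with h | h <;> subst h <;> constructor <;> nlinarith
  have key : 2 - 2 * b ≤ 1 + (2 * b - 1) * v' * v₁ := by nlinarith [hvv.1]
  have hpos : 0 < a * (2 - 2 * b) / 2 := by nlinarith
  constructor
  · calc ((1 - a) / 2) / (a * (1 + (2 * b - 1) * v' * v₁) / 2)
        ≤ ((1 - a) / 2) / (a * (2 - 2 * b) / 2) := by
          apply div_le_div_of_nonneg_left (by linarith) hpos
          nlinarith
      _ = (1 + Real.exp ε₂) / (2 * Real.exp ε₁) := by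
          rw [div_eq_div_iff hpos.ne' (by positivity), ha, hb]
          field_simp
          ring
  · rw [Real.exp_sub, div_le_div_iff₀ (by positivity) (by positivity)]
    nlinarith
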